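/- Let I ⊆ {0,…,l} be nonempty and m a positive integer. (i) For every i ∉ I, the level-m affine reflection σ_i fixes m·ν_I and satisfies σ_i(ν) = s_{α_i}(ν − m·ν_I) + m·ν_I for all ν ∈ 𝔱*, where s_{α_i} ∈ W is the linear reflection in α_i; consequently every w ∈ W_I fixes m·ν_I and acts by ν ↦ w̄(ν − m·ν_I) + m·ν_I, where w̄ is the linear part of w, and w ↦ w̄ is an isomorphism from W_I onto the subgroup W̄_I ⊆ W generated by {s_{α_i} : i ∉ I}. (ii) For w̄ ∈ W̄_I and an integer m ≥ 0, define w̄•_m ν := w̄(ν − m·ν_I) + m·ν_I. Then for every integer k ≥ 0, every w̄ ∈ W̄_I, and every μ ∈ 𝔱*: w̄•_k(μ+ρ_I) − ρ_I = w̄•_{k+h^∨}(μ+ρ) − ρ. -/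

import Mathlib

/- Common setup: an irreducible reduced crystallographic root system `R ⊂ 𝔱*` spanning `𝔱*`,
with simple roots `α 1,…,α l`, `α 0 = -θ` (θ the highest root), coroots, weight lattice,
(level `m`) affine Weyl groups acting on `𝔱*` and `𝔱`, anti-invariants, skew-symmetrization
maps and the associated chain complexes, following Meinrenken,
"On the quantization of conjugacy classes", Section 5. -/

noncomputable section
open scoped BigOperators InnerProductSpace Classical
open Function

namespace CCQ

section Generic

variable {M : Type*} [AddCommGroup M] [Module ℝ M]

/-- The affine reflection `x ↦ x - (f x + c) • v`, where `f v = 2`. -/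
def aref {f : Module.Dual ℝ M} {v : M} (h : f v = 2) (c : ℝ) : M ≃ᵃ[ℝ] M :=
  (Module.reflection h).toAffineEquiv.trans (AffineEquiv.constVAdd ℝ M (-(c • v)))

/-- The determinant of the linear part of an affine transformation, recorded as an
integer sign (all the affine transformations considered here are products of
reflections, whose linear parts have determinant `±1`). -/
def asign (w : M ≃ᵃ[ℝ] M) : ℤ :=
  if LinearMap.det w.linear.toLinearMap = 1 then 1 else -1

/-- `φ` is anti-invariant under the subgroup `H`: `w·φ = det(w)·φ`, for the action
`(w·φ)(x) = φ(w⁻¹ x)`. -/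
def AntiInv (H : Subgroup (M ≃ᵃ[ℝ] M)) (φ : M → ℤ) : Prop :=
  ∀ w ∈ H, ∀ x : M, φ (w⁻¹ x) = asign w * φ x

/-- `Sk^H(x) = Σ_{w ∈ H} det(w) · δ_{w x}` (δ-function skew-symmetrization over a
(finite) subgroup `H`). -/
def SkOrb (H : Subgroup (M ≃ᵃ[ℝ] M)) (x : M) : M → ℤ := fun y =>
  ∑ᶠ w : H, if y = (w : M ≃ᵃ[ℝ] M) x then asign (w : M ≃ᵃ[ℝ] M) else 0

/-- `T` is a complete set of representatives of the left cosets `K/H`. -/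
def IsRepFinset (H K : Subgroup (M ≃ᵃ[ℝ] M)) (T : Finset (M ≃ᵃ[ℝ] M)) : Prop :=
  (↑T : Set (M ≃ᵃ[ℝ] M)) ⊆ (K : Set (M ≃ᵃ[ℝ] M)) ∧
    ∀ w ∈ K, ∃! u, u ∈ T ∧ u⁻¹ * w ∈ H

/-- `T` is a complete set of representatives of the left cosets `K/H` (possibly infinite). -/
def IsRepSet (H K : Subgroup (M ≃ᵃ[ℝ] M)) (T : Set (M ≃ᵃ[ℝ] M)) : Prop :=
  T ⊆ (K : Set (M ≃ᵃ[ℝ] M)) ∧ ∀ w ∈ K, ∃! u, u ∈ T ∧ u⁻¹ * w ∈ H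

/-- Relative skew-symmetrization `Σ_u det(u)·(u·φ)` over a finite set of coset
representatives. -/
def SkRep (T : Finset (M ≃ᵃ[ℝ] M)) (φ : M → ℤ) : M → ℤ := fun x =>
  ∑ u ∈ T, asign u * φ (u⁻¹ x)

/-- Skew-symmetrization `Σ_u det(u)·(u·φ)` over a (possibly infinite, pointwise finite)
set of coset representatives. -/
def SkRepSet (T : Set (M ≃ᵃ[ℝ] M)) (φ : M → ℤ) : M → ℤ := fun x =>
  ∑ᶠ u : T, asign (u : M ≃ᵃ[ℝ] M) * φ ((u : M ≃ᵃ[ℝ] M)⁻¹ x)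

/-- The chain supported on the single direct summand indexed by `I`. -/
def single {n : ℕ} (I : Finset (Fin n)) (φ : M → ℤ) : Finset (Fin n) → M → ℤ := fun K =>
  if K = I then φ else 0

/-- The simplicial differential `∂`: on the summand indexed by `I = {i₀ < … < i_p}`,
`∂φ = Σ_r (-1)^r Sk_I^{δ_r I}(φ)`, written via its components: the component of `∂c` in
the summand indexed by `K` is `Σ_{i ∉ K} (-1)^{#{j ∈ K : j < i}} Sk_{K∪{i}}^K (c (K∪{i}))`.
The skew-symmetrizations `Sk_I^K` are computed using the chosen coset representative
sets `Srep K I` for `W_K/W_I`. -/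
def bdGen {n : ℕ} (Srep : Finset (Fin n) → Finset (Fin n) → Finset (M ≃ᵃ[ℝ] M))
    (c : Finset (Fin n) → M → ℤ) : Finset (Fin n) → M → ℤ := fun K x =>
  ∑ i ∈ Kᶜ, (-1 : ℤ) ^ (K.filter (fun j => j < i)).card *
    SkRep (Srep K (insert i K)) (c (insert i K)) x

/-- Restriction of a `ℤ`-valued function to a subset (extension by zero). -/
def restr (O : Set M) (φ : M → ℤ) : M → ℤ := fun x => if x ∈ O then φ x else 0

end Generic

/-- An irreducible reduced crystallographic root system `R` in `𝔱*`, spanning `𝔱*`,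
together with a choice of simple roots `α 1, …, α l` and `α 0 := -θ`, where `θ` is the
highest root.  `coroot β ∈ 𝔱` is the coroot `β^∨` of a root `β ∈ R`. -/
structure RSD (𝔱 : Type*) [AddCommGroup 𝔱] [Module ℝ 𝔱] where
  l : ℕ
  hl : 0 < l
  R : Set (Module.Dual ℝ 𝔱)
  finR : R.Finite
  spanR : Submodule.span ℝ R = ⊤
  coroot : Module.Dual ℝ 𝔱 → 𝔱
  pair_self : ∀ β ∈ R, β (coroot β) = 2
  cryst : ∀ β ∈ R, ∀ γ ∈ R, ∃ n : ℤ, γ (coroot β) = (n : ℝ)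
  reduced : ∀ β ∈ R, ∀ t : ℝ, t • β ∈ R → t = 1 ∨ t = -1
  reflect_mem : ∀ β ∈ R, ∀ γ ∈ R, γ - γ (coroot β) • β ∈ R
  α : Fin (l + 1) → Module.Dual ℝ 𝔱
  α_mem : ∀ i, α i ∈ R
  indep : LinearIndependent ℝ fun i : Fin l => α i.succ
  base : ∀ β ∈ R, (∃ c : Fin l → ℕ, β = ∑ i, (c i : ℝ) • α i.succ) ∨
    ∃ c : Fin l → ℕ, β = -∑ i, (c i : ℝ) • α i.succ
  highest : ∀ β ∈ R, ∃ c : Fin l → ℕ, -α 0 - β = ∑ i, (c i : ℝ) • α i.succ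
  irred : ∀ T : Set (Fin l), T.Nonempty → Tᶜ.Nonempty →
    ∃ i ∈ T, ∃ j ∈ Tᶜ, α i.succ (coroot (α j.succ)) ≠ 0

namespace RSD

variable {𝔱 : Type*} [AddCommGroup 𝔱] [Module ℝ 𝔱] (S : RSD 𝔱)

/-- The highest root `θ`. -/
def theta : Module.Dual ℝ 𝔱 := -S.α 0

/-- The Kronecker delta `δ_{i,0}`. -/
def kd (i : Fin (S.l + 1)) : ℝ := if i = 0 then 1 else 0

/-- The positive roots. -/
def posRoots : Finset (Module.Dual ℝ 𝔱) :=
  S.finR.toFinset.filter fun β => ∃ c : Fin S.l → ℕ, β = ∑ i, (c i : ℝ) • S.α i.succ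

/-- `ρ`, the half-sum of the positive roots. -/
def rho : Module.Dual ℝ 𝔱 := (2 : ℝ)⁻¹ • ∑ β ∈ S.posRoots, β

/-- The dual Coxeter number `h^∨ = 1 + ⟨ρ, θ^∨⟩`. -/
def hv : ℝ := 1 + S.rho (S.coroot S.theta)

/-- The weight lattice `Λ* = {μ : ⟨μ, β^∨⟩ ∈ ℤ for all β ∈ R}`. -/
def wlat : Set (Module.Dual ℝ 𝔱) := {μ | ∀ β ∈ S.R, ∃ n : ℤ, μ (S.coroot β) = (n : ℝ)}

theorem pairD (i : Fin (S.l + 1)) :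
    Module.Dual.eval ℝ 𝔱 (S.coroot (S.α i)) (S.α i) = 2 := by
  simpa using S.pair_self (S.α i) (S.α_mem i)

theorem pairDR {β : Module.Dual ℝ 𝔱} (hβ : β ∈ S.R) :
    Module.Dual.eval ℝ 𝔱 (S.coroot β) β = 2 := by
  simpa using S.pair_self β hβ

/-- The linear reflection `s_{α_i} : ν ↦ ν - ⟨ν, α_i^∨⟩ α_i` on `𝔱*`. -/
def srefl (i : Fin (S.l + 1)) : Module.Dual ℝ 𝔱 ≃ₗ[ℝ] Module.Dual ℝ 𝔱 :=
  Module.reflection (S.pairD i)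

/-- The linear reflection `s_β` on `𝔱*`, for a root `β ∈ R`. -/
def sreflRoot {β : Module.Dual ℝ 𝔱} (hβ : β ∈ S.R) :
    Module.Dual ℝ 𝔱 ≃ₗ[ℝ] Module.Dual ℝ 𝔱 :=
  Module.reflection (S.pairDR hβ)

/-- The Weyl group `W` acting on `𝔱*` (viewed inside the group of affine
transformations of `𝔱*`): the group generated by the reflections `s_β`, `β ∈ R`. -/
def WeylA : Subgroup (Module.Dual ℝ 𝔱 ≃ᵃ[ℝ] Module.Dual ℝ 𝔱) :=
  Subgroup.closure {w | ∃ β, ∃ hβ : β ∈ S.R, w = (S.sreflRoot hβ).toAffineEquiv}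

/-- The subgroup `W̄_I ⊆ W` of linear automorphisms of `𝔱*` generated by the
reflections `s_{α_i}`, `i ∉ I`. -/
def WbarI (I : Finset (Fin (S.l + 1))) :
    Subgroup (Module.Dual ℝ 𝔱 ≃ₗ[ℝ] Module.Dual ℝ 𝔱) :=
  Subgroup.closure {e | ∃ i ∉ I, e = S.srefl i}

/-- The level `m` affine reflection `σ_i : ν ↦ ν - (⟨ν,α_i^∨⟩ + m δ_{i,0}) α_i` of `𝔱*`. -/
def sigma (m : ℝ) (i : Fin (S.l + 1)) :
    Module.Dual ℝ 𝔱 ≃ᵃ[ℝ] Module.Dual ℝ 𝔱 :=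
  aref (S.pairD i) (m * S.kd i)

/-- The level `m` affine Weyl group `W_aff(m)`, acting on `𝔱*`. -/
def WaffA (m : ℝ) : Subgroup (Module.Dual ℝ 𝔱 ≃ᵃ[ℝ] Module.Dual ℝ 𝔱) :=
  Subgroup.closure (Set.range (S.sigma m))

/-- The subgroup `W_I ⊆ W_aff(m)` generated by the `σ_i` with `i ∉ I`. -/
def WIA (m : ℝ) (I : Finset (Fin (S.l + 1))) :
    Subgroup (Module.Dual ℝ 𝔱 ≃ᵃ[ℝ] Module.Dual ℝ 𝔱) :=
  Subgroup.closure {w | ∃ i ∉ I, w = S.sigma m i}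

/-- `ℤ[Λ*]^{W_I-as}`: finitely supported functions `Λ* → ℤ` that are `W_I`-anti-invariant. -/
def ZLamAS (m : ℝ) (I : Finset (Fin (S.l + 1))) : Set (Module.Dual ℝ 𝔱 → ℤ) :=
  {φ | (support φ).Finite ∧ support φ ⊆ S.wlat ∧ AntiInv (S.WIA m I) φ}

/-- `ℤ[[Λ*]]^{W_aff-as}`: all functions `Λ* → ℤ` that are `W_aff(m)`-anti-invariant. -/
def ZZLamAS (m : ℝ) : Set (Module.Dual ℝ 𝔱 → ℤ) :=
  {φ | support φ ⊆ S.wlat ∧ AntiInv (S.WaffA m) φ}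

/-- The chain group `C_p = ⊕_{|I| = p+1} ℤ[Λ*]^{W_I-as}`, realized as the set of
families `c` with `c I ∈ ℤ[Λ*]^{W_I-as}` for `#I = p+1` and `c I = 0` otherwise. -/
def ChainA (m : ℝ) (p : ℕ) : Set (Finset (Fin (S.l + 1)) → Module.Dual ℝ 𝔱 → ℤ) :=
  {c | ∀ I, (I.card = p + 1 → c I ∈ S.ZLamAS m I) ∧ (I.card ≠ p + 1 → c I = 0)}

/-- The family `Srep` provides coset representatives of `W_K/W_I` for all `K ⊆ I`. -/
def RepFamilyA (m : ℝ)
    (Srep : Finset (Fin (S.l + 1)) → Finset (Fin (S.l + 1)) →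
      Finset (Module.Dual ℝ 𝔱 ≃ᵃ[ℝ] Module.Dual ℝ 𝔱)) : Prop :=
  ∀ K I : Finset (Fin (S.l + 1)), K.Nonempty → K ⊆ I →
    IsRepFinset (S.WIA m I) (S.WIA m K) (Srep K I)

/-- The family `Seps` provides coset representatives of `W_aff(m)/W_{{i}}`. -/
def RepEpsA (m : ℝ)
    (Seps : Fin (S.l + 1) → Set (Module.Dual ℝ 𝔱 ≃ᵃ[ℝ] Module.Dual ℝ 𝔱)) : Prop :=
  ∀ i, IsRepSet (S.WIA m {i}) (S.WaffA m) (Seps i)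

/-- The augmentation `ε : C_0 → ℤ[[Λ*]]^{W_aff-as}`, given on the summand indexed by
`{i}` by `Σ_u det(u)·(u·φ)`, `u` running over the coset representatives `Seps i`. -/
def epsA (Seps : Fin (S.l + 1) → Set (Module.Dual ℝ 𝔱 ≃ᵃ[ℝ] Module.Dual ℝ 𝔱))
    (c : Finset (Fin (S.l + 1)) → Module.Dual ℝ 𝔱 → ℤ) : Module.Dual ℝ 𝔱 → ℤ := fun x =>
  ∑ i, SkRepSet (Seps i) (c {i}) x

/-- The orbit of `μ ∈ 𝔱*` under the level `m` affine Weyl group. -/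
def orbA (m : ℝ) (μ : Module.Dual ℝ 𝔱) : Set (Module.Dual ℝ 𝔱) :=
  {ν | ∃ w ∈ S.WaffA m, ν = w μ}

/-- `Λ*_{I,k} = {μ ∈ Λ* : ⟨μ,α_i^∨⟩ + k δ_{i,0} ≥ 0 for all i ∉ I}`. -/
def LamIk (k : ℝ) (I : Finset (Fin (S.l + 1))) : Set (Module.Dual ℝ 𝔱) :=
  {μ ∈ S.wlat | ∀ i ∉ I, μ (S.coroot (S.α i)) + k * S.kd i ≥ 0}

/-- `Λ*_k`, the set of level `k` weights. -/
def LamK (k : ℝ) : Set (Module.Dual ℝ 𝔱) :=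
  {μ ∈ S.wlat | ∀ i, μ (S.coroot (S.α i)) + k * S.kd i ≥ 0}

/-- The positive roots of `R_I = R ∩ ℤ-span(𝔖_I)` relative to the base
`𝔖_I = {α_i : i ∉ I}`: the roots that are `ℕ`-combinations of `𝔖_I`. -/
def posRootsI (I : Finset (Fin (S.l + 1))) : Finset (Module.Dual ℝ 𝔱) :=
  S.finR.toFinset.filter fun β =>
    ∃ c : Fin (S.l + 1) → ℕ, (∀ i ∈ I, c i = 0) ∧ β = ∑ i, (c i : ℝ) • S.α i

/-- `ρ_I`, the half-sum of the positive roots of `R_I`. -/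
def rhoI (I : Finset (Fin (S.l + 1))) : Module.Dual ℝ 𝔱 :=
  (2 : ℝ)⁻¹ • ∑ β ∈ S.posRootsI I, β

/-- `ν_I = (ρ - ρ_I)/h^∨`. -/
def nuI (I : Finset (Fin (S.l + 1))) : Module.Dual ℝ 𝔱 := S.hv⁻¹ • (S.rho - S.rhoI I)

theorem pairB (i : Fin (S.l + 1)) : S.α i (S.coroot (S.α i)) = 2 :=
  S.pair_self (S.α i) (S.α_mem i)

/-- The affine reflection `r_i : ξ ↦ ξ - (⟨α_i,ξ⟩ + δ_{i,0}) α_i^∨` of `𝔱`, i.e. the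
orthogonal (for the basic inner product) reflection in the hyperplane
`{ξ : ⟨α_i,ξ⟩ + δ_{i,0} = 0}`. -/
def rrefl (i : Fin (S.l + 1)) : 𝔱 ≃ᵃ[ℝ] 𝔱 := aref (S.pairB i) (S.kd i)

/-- The affine Weyl group `W_aff` acting on `𝔱`, generated by `r_0, …, r_l`. -/
def WaffB : Subgroup (𝔱 ≃ᵃ[ℝ] 𝔱) := Subgroup.closure (Set.range S.rrefl)

/-- The subgroup `W_I ⊆ W_aff` generated by the `r_i` with `i ∉ I`. -/
def WIB (I : Finset (Fin (S.l + 1))) : Subgroup (𝔱 ≃ᵃ[ℝ] 𝔱) :=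
  Subgroup.closure {w | ∃ i ∉ I, w = S.rrefl i}

/-- The orbit `V = W_aff · ξ ⊆ 𝔱`. -/
def orbB (ξ : 𝔱) : Set 𝔱 := {x | ∃ w ∈ S.WaffB, x = w ξ}

/-- `ℓ(x) = min {ℓ(w) : w ∈ W_aff, x = w·ξ}`: the minimal length of a word in the
generators `r_0,…,r_l` moving `ξ` to `x`. -/
def lenPt (ξ x : 𝔱) : ℕ :=
  sInf {n | ∃ L : List (Fin (S.l + 1)), L.length = n ∧ x = (L.map S.rrefl).prod ξ}

/-- `𝔱_{I,+} = {ξ : ⟨α_i,ξ⟩ + δ_{i,0} ≥ 0 for all i ∉ I}`. -/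
def tplus (I : Finset (Fin (S.l + 1))) : Set 𝔱 := {ξ | ∀ i ∉ I, S.α i ξ + S.kd i ≥ 0}

/-- `V̄^I = V ∩ 𝔱_{I,+}`. -/
def VbarI (ξ : 𝔱) (I : Finset (Fin (S.l + 1))) : Set 𝔱 := S.orbB ξ ∩ S.tplus I

/-- `V^I = V ∩ int(𝔱_{I,+})`. -/
def VIset [TopologicalSpace 𝔱] (ξ : 𝔱) (I : Finset (Fin (S.l + 1))) : Set 𝔱 :=
  S.orbB ξ ∩ interior (S.tplus I)

/-- `ℤ[V]^{W_I-as}`: finitely supported functions `V → ℤ` that are `W_I`-anti-invariant. -/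
def ZVAS (ξ : 𝔱) (I : Finset (Fin (S.l + 1))) : Set (𝔱 → ℤ) :=
  {φ | (support φ).Finite ∧ support φ ⊆ S.orbB ξ ∧ AntiInv (S.WIB I) φ}

/-- The chain group `C_p(J) = ⊕_{|I| = p+1} ℤ[V]^{W_I-as}`. -/
def ChainB (ξ : 𝔱) (p : ℕ) : Set (Finset (Fin (S.l + 1)) → 𝔱 → ℤ) :=
  {c | ∀ I, (I.card = p + 1 → c I ∈ S.ZVAS ξ I) ∧ (I.card ≠ p + 1 → c I = 0)}

/-- The family `Srep` provides coset representatives of `W_K/W_I` for all `K ⊆ I`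
(affine Weyl group acting on `𝔱`). -/
def RepFamilyB (Srep : Finset (Fin (S.l + 1)) → Finset (Fin (S.l + 1)) →
    Finset (𝔱 ≃ᵃ[ℝ] 𝔱)) : Prop :=
  ∀ K I : Finset (Fin (S.l + 1)), K.Nonempty → K ⊆ I →
    IsRepFinset (S.WIB I) (S.WIB K) (Srep K I)

/-- The filtration `F_N C_p(J)`: the subgroup generated by the basis elements
`β_I(x) = Sk^I(x)` with `#I = p+1`, `x ∈ V^I`, `ℓ(x) ≤ N`. -/
def FNB [TopologicalSpace 𝔱] (ξ : 𝔱) (N : ℤ) (p : ℕ) :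
    AddSubgroup (Finset (Fin (S.l + 1)) → 𝔱 → ℤ) :=
  AddSubgroup.closure {c | ∃ I x, I.card = p + 1 ∧ x ∈ S.VIset ξ I ∧
    (S.lenPt ξ x : ℤ) ≤ N ∧ c = single I (SkOrb (S.WIB I) x)}

/-- The homotopy operator `h_i`, defined on basis elements by `h_i β_I(x) = 0` if
`i ∈ I` and `h_i β_I(x) = (-1)^{#{j ∈ I : j < i}} β_{I∪{i}}(x)` if `i ∉ I` (the
coefficient of `β_I(x)`, `x ∈ V^I`, in an anti-invariant `φ` is `φ(x)`). -/
def hBmap [TopologicalSpace 𝔱] (ξ : 𝔱) (i : Fin (S.l + 1))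
    (c : Finset (Fin (S.l + 1)) → 𝔱 → ℤ) : Finset (Fin (S.l + 1)) → 𝔱 → ℤ := fun K y =>
  if i ∈ K then
    ∑ᶠ x : S.VIset ξ (K.erase i),
      (-1 : ℤ) ^ ((K.erase i).filter (fun j => j < i)).card * c (K.erase i) (x : 𝔱) *
        SkOrb (S.WIB K) (x : 𝔱) y
  else 0

/-- `A_i = id - h_i ∂ - ∂ h_i`. -/
def AiB [TopologicalSpace 𝔱] (ξ : 𝔱)
    (Srep : Finset (Fin (S.l + 1)) → Finset (Fin (S.l + 1)) → Finset (𝔱 ≃ᵃ[ℝ] 𝔱))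
    (i : Fin (S.l + 1)) (c : Finset (Fin (S.l + 1)) → 𝔱 → ℤ) :
    Finset (Fin (S.l + 1)) → 𝔱 → ℤ :=
  c - S.hBmap ξ i (bdGen Srep c) - bdGen Srep (S.hBmap ξ i c)

/-- `A = A_0 ∘ A_1 ∘ ⋯ ∘ A_l`. -/
def Acomp [TopologicalSpace 𝔱] (ξ : 𝔱)
    (Srep : Finset (Fin (S.l + 1)) → Finset (Fin (S.l + 1)) → Finset (𝔱 ≃ᵃ[ℝ] 𝔱))
    (c : Finset (Fin (S.l + 1)) → 𝔱 → ℤ) : Finset (Fin (S.l + 1)) → 𝔱 → ℤ :=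
  (List.finRange (S.l + 1)).foldr (fun i d => S.AiB ξ Srep i d) c

end RSD

end CCQ

open CCQ Function

namespace CCQ.RSD

variable {𝔱 : Type*} [AddCommGroup 𝔱] [Module ℝ 𝔱] (S : RSD 𝔱)

lemma root_ne_zero {β : Module.Dual ℝ 𝔱} (hβ : β ∈ S.R) : β ≠ 0 := by
  intro h
  have := S.pair_self β hβ
  rw [h] at this
  simp at this

lemma neg_mem' {β : Module.Dual ℝ 𝔱} (hβ : β ∈ S.R) : -β ∈ S.R := by
  have h := S.reflect_mem β hβ β hβ
  rw [S.pair_self β hβ] at h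
  have h2 : β - (2:ℝ) • β = -β := by module
  rwa [h2] at h

lemma theta_mem : S.theta ∈ S.R := S.neg_mem' (S.α_mem 0)

lemma succ_rep_unique (x y : Fin S.l → ℝ)
    (h : ∑ k, x k • S.α k.succ = ∑ k, y k • S.α k.succ) : ∀ k, x k = y k := by
  have h2 := Fintype.linearIndependent_iff.mp S.indep
  intro k
  have hz : ∑ j, (x j - y j) • S.α j.succ = 0 := by
    have e1 : ∀ j : Fin S.l, (x j - y j) • S.α j.succ = x j • S.α j.succ - y j • S.α j.succ :=
      fun j => by module
    rw [Finset.sum_congr rfl fun j _ => e1 j, Finset.sum_sub_distrib, h, sub_self]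
  have := h2 (fun j => x j - y j) hz k
  linarith

lemma exists_t : ∃ t : Fin S.l → ℕ,
    S.theta = ∑ k, (t k : ℝ) • S.α k.succ ∧ ∀ k, 1 ≤ t k := by
  have hrep : ∀ j : Fin S.l, ∃ c : Fin S.l → ℕ,
      S.theta = ∑ k, ((c k + if k = j then 1 else 0 : ℕ) : ℝ) • S.α k.succ := by
    intro j
    obtain ⟨c, hc⟩ := S.highest (S.α j.succ) (S.α_mem _)
    refine ⟨c, ?_⟩
    have h2 : S.theta = ∑ k, (c k : ℝ) • S.α k.succ + S.α j.succ := by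
      rw [show S.theta = -S.α 0 from rfl, ← hc]; abel
    rw [h2]
    have h3 : ∀ k : Fin S.l, ((c k + if k = j then 1 else 0 : ℕ) : ℝ) • S.α k.succ
        = (c k : ℝ) • S.α k.succ + (if k = j then (1:ℝ) else 0) • S.α k.succ := by
      intro k
      push_cast
      split <;> module
    rw [Finset.sum_congr rfl fun k _ => h3 k, Finset.sum_add_distrib]
    congr 1
    simp [ite_smul]
  have j0 : Fin S.l := ⟨0, S.hl⟩
  obtain ⟨c0, hc0⟩ := hrep j0
  refine ⟨fun k => c0 k + if k = j0 then 1 else 0, hc0, ?_⟩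
  intro k
  obtain ⟨c1, hc1⟩ := hrep k
  have hu := S.succ_rep_unique _ _ (hc0.symm.trans hc1) k
  have hk : ((c0 k + if k = j0 then 1 else 0 : ℕ) : ℝ) = ((c1 k + if k = k then 1 else 0 : ℕ) : ℝ) := hu
  have h5 : c0 k + (if k = j0 then 1 else 0) = c1 k + if k = k then 1 else 0 := by exact_mod_cast hk
  by_cases hkj : k = j0 <;> simp [hkj] at h5 ⊢ <;> omega

lemma mem_posRoots {β : Module.Dual ℝ 𝔱} :
    β ∈ S.posRoots ↔ β ∈ S.R ∧ ∃ c : Fin S.l → ℕ, β = ∑ k, (c k : ℝ) • S.α k.succ := by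
  simp [RSD.posRoots, S.finR.mem_toFinset]

lemma pos_of_rep {γ : Module.Dual ℝ 𝔱} (hγ : γ ∈ S.R) (z : Fin S.l → ℝ)
    (hrep : γ = ∑ k, z k • S.α k.succ) {k0 : Fin S.l} (hk0 : 0 < z k0) :
    (∀ k, 0 ≤ z k) ∧ γ ∈ S.posRoots := by
  rcases S.base γ hγ with ⟨c, hc⟩ | ⟨c, hc⟩
  · have hu := S.succ_rep_unique z (fun k => (c k : ℝ)) (hrep.symm.trans hc)
    constructor
    · intro k; rw [hu k]; positivity
    · exact S.mem_posRoots.mpr ⟨hγ, c, hc⟩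
  · exfalso
    have hc' : γ = ∑ k, (-(c k : ℝ)) • S.α k.succ := by
      rw [hc, ← Finset.sum_neg_distrib]
      exact Finset.sum_congr rfl fun k _ => (neg_smul _ _).symm
    have hu := S.succ_rep_unique z (fun k => -(c k : ℝ)) (hrep.symm.trans hc')
    have h1 : z k0 = -(c k0 : ℝ) := hu k0
    have h2 : (0:ℝ) ≤ (c k0 : ℝ) := by positivity
    linarith

end CCQ.RSD


namespace CCQ.RSD
set_option maxHeartbeats 1000000

variable {𝔱 : Type*} [AddCommGroup 𝔱] [Module ℝ 𝔱] (S : RSD 𝔱)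

lemma theta_posRoot : S.theta ∈ S.posRoots := by
  obtain ⟨t, ht, _⟩ := S.exists_t
  exact S.mem_posRoots.mpr ⟨S.theta_mem, t, ht⟩

lemma pair_theta_nonneg {β : Module.Dual ℝ 𝔱} (hβ : β ∈ S.posRoots) :
    0 ≤ β (S.coroot S.theta) := by
  by_contra hneg
  push_neg at hneg
  obtain ⟨hβR, b, hb⟩ := S.mem_posRoots.mp hβ
  obtain ⟨t, ht, ht1⟩ := S.exists_t
  have htk : ∀ k, (1:ℝ) ≤ (t k : ℝ) := fun k => by exact_mod_cast ht1 k
  obtain ⟨n, hn⟩ := S.cryst S.theta S.theta_mem β hβR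
  have hnneg : n < 0 := by
    have hr : (n:ℝ) < 0 := by rw [← hn]; exact hneg
    exact_mod_cast hr
  have hn1 : (n:ℝ) ≤ -1 := by
    have : n ≤ -1 := by omega
    exact_mod_cast this
  have hγR : β - β (S.coroot S.theta) • S.theta ∈ S.R :=
    S.reflect_mem _ S.theta_mem β hβR
  set γ := β - β (S.coroot S.theta) • S.theta with hγdef
  have key : (∑ k : Fin S.l, (b k : ℝ) • S.α k.succ)
      - (n:ℝ) • (∑ k : Fin S.l, (t k : ℝ) • S.α k.succ)
      = ∑ k : Fin S.l, ((b k : ℝ) - n * t k) • S.α k.succ := by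
    rw [Finset.smul_sum, ← Finset.sum_sub_distrib]
    exact Finset.sum_congr rfl fun k _ => by module
  have hrep : γ = ∑ k : Fin S.l, ((b k : ℝ) - n * t k) • S.α k.succ := by
    rw [hγdef, hn, hb, ht]
    exact key
  have hzpos : ∀ k, (t k : ℝ) ≤ (b k : ℝ) - n * t k := by
    intro k
    have h0 : (0:ℝ) ≤ (b k : ℝ) := by positivity
    nlinarith [htk k]
  have hk0 : (0:ℝ) < (b ⟨0, S.hl⟩ : ℝ) - n * t ⟨0, S.hl⟩ := by
    have := hzpos ⟨0, S.hl⟩; have := htk ⟨0, S.hl⟩; linarith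
  obtain ⟨hnn, hγpos⟩ := S.pos_of_rep hγR _ hrep hk0
  obtain ⟨d, hd⟩ := S.highest γ hγR
  have hd' : S.theta - γ = ∑ k : Fin S.l, (d k : ℝ) • S.α k.succ := hd
  have hsub : S.theta - γ = ∑ k : Fin S.l, ((t k : ℝ) - ((b k : ℝ) - n * t k)) • S.α k.succ := by
    rw [ht, hrep, ← Finset.sum_sub_distrib]
    exact Finset.sum_congr rfl fun k _ => by module
  have hdk := S.succ_rep_unique _ _ (hsub.symm.trans hd')
  have hb0 : ∀ k : Fin S.l, (b k : ℝ) = 0 := by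
    intro k
    have h1 := hdk k
    have h2 : (0:ℝ) ≤ (d k : ℝ) := by positivity
    have h3 := hzpos k
    have h4 : (0:ℝ) ≤ (b k : ℝ) := by positivity
    nlinarith [htk k]
  have hβ0 : β = 0 := by
    rw [hb]
    apply Finset.sum_eq_zero
    intro k _
    rw [hb0 k]
    module
  exact S.root_ne_zero hβR hβ0

lemma rho_theta_ge : 1 ≤ S.rho (S.coroot S.theta) := by
  have h1 : S.rho (S.coroot S.theta)
      = 2⁻¹ * ∑ β ∈ S.posRoots, β (S.coroot S.theta) := by
    rw [RSD.rho]
    simp [LinearMap.smul_apply]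
  rw [h1]
  have h2 : S.theta (S.coroot S.theta) = 2 := S.pair_self _ S.theta_mem
  have h3 : 2 ≤ ∑ β ∈ S.posRoots, β (S.coroot S.theta) := by
    have h4 := Finset.single_le_sum
      (f := fun β : Module.Dual ℝ 𝔱 => β (S.coroot S.theta))
      (fun β hβ => S.pair_theta_nonneg hβ) S.theta_posRoot
    simpa [h2] using h4
  linarith

lemma hv_pos : 0 < S.hv := by
  have := S.rho_theta_ge
  rw [RSD.hv]
  linarith

lemma hv_ne : S.hv ≠ 0 := ne_of_gt S.hv_pos

lemma full_rep (x : Fin (S.l+1) → ℝ) {t : Fin S.l → ℕ}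
    (ht : S.theta = ∑ k, (t k : ℝ) • S.α k.succ) :
    ∑ i, x i • S.α i = ∑ k : Fin S.l, (x k.succ - x 0 * t k) • S.α k.succ := by
  rw [Fin.sum_univ_succ]
  have e1 : x 0 • S.theta = ∑ k : Fin S.l, (x 0 * t k) • S.α k.succ := by
    rw [ht, Finset.smul_sum]
    exact Finset.sum_congr rfl fun k _ => by module
  have e2 : ∑ k : Fin S.l, (x k.succ - x 0 * t k) • S.α k.succ
      = ∑ k : Fin S.l, x k.succ • S.α k.succ - ∑ k : Fin S.l, (x 0 * t k) • S.α k.succ := by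
    rw [← Finset.sum_sub_distrib]
    exact Finset.sum_congr rfl fun k _ => by module
  rw [e2, ← e1, show S.α 0 = -S.theta by rw [show S.theta = -S.α 0 from rfl]; module]
  rw [smul_neg]
  abel

lemma indepI {I : Finset (Fin (S.l+1))} (hI : I.Nonempty) (x : Fin (S.l+1) → ℝ)
    (hxI : ∀ i ∈ I, x i = 0) (hsum : ∑ i, x i • S.α i = 0) : ∀ i, x i = 0 := by
  obtain ⟨t, ht, ht1⟩ := S.exists_t
  have h1 : ∀ k, x k.succ - x 0 * t k = 0 := by
    have hfr := S.full_rep x ht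
    have h0 : ∑ k : Fin S.l, (x k.succ - x 0 * t k) • S.α k.succ
        = ∑ k : Fin S.l, (0:ℝ) • S.α k.succ := by
      rw [← hfr, hsum]
      simp
    exact fun k => S.succ_rep_unique _ _ h0 k
  have hx0 : x 0 = 0 := by
    by_cases h0 : (0 : Fin (S.l+1)) ∈ I
    · exact hxI 0 h0
    · obtain ⟨j, hj⟩ := hI
      rcases Fin.eq_zero_or_eq_succ j with rfl | ⟨k, rfl⟩
      · exact absurd hj h0
      · have h2 := h1 k
        have hxj : x k.succ = 0 := hxI _ hj
        have htk : (1:ℝ) ≤ (t k : ℝ) := by exact_mod_cast ht1 k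
        rcases mul_eq_zero.mp (by linarith [h2] : x 0 * (t k : ℝ) = 0) with h | h
        · exact h
        · linarith
  intro i
  rcases Fin.eq_zero_or_eq_succ i with rfl | ⟨k, rfl⟩
  · exact hx0
  · have := h1 k
    rw [hx0] at this
    linarith

lemma signcoh {I : Finset (Fin (S.l+1))} (hI : I.Nonempty) {γ : Module.Dual ℝ 𝔱}
    (hγ : γ ∈ S.R) (z : Fin (S.l+1) → ℤ) (hzI : ∀ i ∈ I, z i = 0)
    (hrep : γ = ∑ i, (z i : ℝ) • S.α i) {k0 : Fin (S.l+1)} (hk0 : 0 < z k0) :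
    ∀ i, 0 ≤ z i := by
  obtain ⟨t, ht, ht1⟩ := S.exists_t
  have htk : ∀ k, (1:ℝ) ≤ (t k : ℝ) := fun k => by exact_mod_cast ht1 k
  have hrep' : γ = ∑ k : Fin S.l, ((z k.succ : ℝ) - (z 0 : ℝ) * t k) • S.α k.succ := by
    rw [hrep]
    exact S.full_rep _ ht
  have hkhat : z 0 ≠ 0 → ∃ kh : Fin S.l, kh.succ ∈ I := by
    intro hne
    obtain ⟨j, hj⟩ := hI
    rcases Fin.eq_zero_or_eq_succ j with rfl | ⟨k, rfl⟩
    · exact absurd (hzI 0 hj) hne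
    · exact ⟨k, hj⟩
  rcases lt_trichotomy (z 0) 0 with hz0 | hz0 | hz0
  · -- z 0 < 0 : contradiction
    exfalso
    obtain ⟨kh, hkh⟩ := hkhat (by omega)
    have hzkh : z kh.succ = 0 := hzI _ hkh
    have hz0le : (z 0 : ℝ) ≤ -1 := by exact_mod_cast (by omega : z 0 ≤ -1)
    have hwkh : (0:ℝ) < (z kh.succ : ℝ) - (z 0 : ℝ) * t kh := by
      rw [hzkh]
      push_cast
      nlinarith [htk kh]
    obtain ⟨hnn, hγpos⟩ := S.pos_of_rep hγ _ hrep' hwkh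
    obtain ⟨d, hd⟩ := S.highest γ hγ
    have hd' : S.theta - γ = ∑ k : Fin S.l, (d k : ℝ) • S.α k.succ := hd
    have hsub : S.theta - γ
        = ∑ k : Fin S.l, ((t k : ℝ) - ((z k.succ : ℝ) - (z 0 : ℝ) * t k)) • S.α k.succ := by
      rw [ht, hrep', ← Finset.sum_sub_distrib]
      exact Finset.sum_congr rfl fun k _ => by module
    have hdk := S.succ_rep_unique _ _ (hsub.symm.trans hd')
    have hz0eq : (z 0 : ℝ) = -1 := by
      have h1 := hdk kh
      have h2 : (0:ℝ) ≤ (d kh : ℝ) := by positivity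
      rw [show (z kh.succ : ℝ) = 0 by exact_mod_cast hzkh] at h1
      nlinarith [htk kh]
    have hzle : ∀ k : Fin S.l, (z k.succ : ℝ) ≤ 0 := by
      intro k
      have h1 := hdk k
      have h2 : (0:ℝ) ≤ (d k : ℝ) := by positivity
      rw [hz0eq] at h1
      nlinarith
    rcases Fin.eq_zero_or_eq_succ k0 with rfl | ⟨k, rfl⟩
    · omega
    · have := hzle k
      have : (0:ℝ) < (z k.succ : ℝ) := by exact_mod_cast hk0
      linarith [hzle k]
  · -- z 0 = 0
    rcases Fin.eq_zero_or_eq_succ k0 with rfl | ⟨k, rfl⟩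
    · omega
    · have hpos : (0:ℝ) < (z k.succ : ℝ) - (z 0 : ℝ) * t k := by
        rw [hz0]
        push_cast
        simpa using (by exact_mod_cast hk0 : (0:ℝ) < (z k.succ : ℝ))
      obtain ⟨hnn, _⟩ := S.pos_of_rep hγ _ hrep' hpos
      intro i
      rcases Fin.eq_zero_or_eq_succ i with rfl | ⟨k', rfl⟩
      · omega
      · have := hnn k'
        rw [hz0] at this
        push_cast at this
        exact_mod_cast (by linarith : (0:ℝ) ≤ (z k'.succ : ℝ))
  · -- z 0 > 0
    obtain ⟨kh, hkh⟩ := hkhat (by omega)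
    have hzkh : z kh.succ = 0 := hzI _ hkh
    have hz0ge : (1:ℝ) ≤ (z 0 : ℝ) := by exact_mod_cast (by omega : (1:ℤ) ≤ z 0)
    have hrepn : -γ = ∑ k : Fin S.l, ((z 0 : ℝ) * t k - (z k.succ : ℝ)) • S.α k.succ := by
      rw [hrep', ← Finset.sum_neg_distrib]
      exact Finset.sum_congr rfl fun k _ => by module
    have hposn : (0:ℝ) < (z 0 : ℝ) * t kh - (z kh.succ : ℝ) := by
      rw [show (z kh.succ : ℝ) = 0 by exact_mod_cast hzkh]
      nlinarith [htk kh]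
    obtain ⟨hnn, hmem⟩ := S.pos_of_rep (S.neg_mem' hγ) _ hrepn hposn
    obtain ⟨d, hd⟩ := S.highest (-γ) (S.neg_mem' hγ)
    have hd' : S.theta - -γ = ∑ k : Fin S.l, (d k : ℝ) • S.α k.succ := hd
    rw [sub_neg_eq_add] at hd'
    have hadd : S.theta + γ
        = ∑ k : Fin S.l, ((t k : ℝ) + ((z k.succ : ℝ) - (z 0 : ℝ) * t k)) • S.α k.succ := by
      rw [ht, hrep', ← Finset.sum_add_distrib]
      exact Finset.sum_congr rfl fun k _ => by module
    have hdk := S.succ_rep_unique _ _ (hadd.symm.trans hd')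
    have hz0eq : (z 0 : ℝ) = 1 := by
      have h1 := hdk kh
      have h2 : (0:ℝ) ≤ (d kh : ℝ) := by positivity
      rw [show (z kh.succ : ℝ) = 0 by exact_mod_cast hzkh] at h1
      nlinarith [htk kh]
    intro i
    rcases Fin.eq_zero_or_eq_succ i with rfl | ⟨k, rfl⟩
    · omega
    · have h1 := hdk k
      have h2 : (0:ℝ) ≤ (d k : ℝ) := by positivity
      rw [hz0eq] at h1
      exact_mod_cast (by linarith : (0:ℝ) ≤ (z k.succ : ℝ))

end CCQ.RSD


namespace CCQ.RSD

variable {𝔱 : Type*} [AddCommGroup 𝔱] [Module ℝ 𝔱] (S : RSD 𝔱)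

lemma mem_posRootsI {I : Finset (Fin (S.l+1))} {β : Module.Dual ℝ 𝔱} :
    β ∈ S.posRootsI I ↔ β ∈ S.R ∧ ∃ c : Fin (S.l+1) → ℕ,
      (∀ i ∈ I, c i = 0) ∧ β = ∑ i, (c i : ℝ) • S.α i := by
  simp [RSD.posRootsI, S.finR.mem_toFinset]

lemma alpha_mem_posRootsI {I : Finset (Fin (S.l+1))} {i : Fin (S.l+1)} (hi : i ∉ I) :
    S.α i ∈ S.posRootsI I := by
  have hsum : ∑ j, (((if j = i then 1 else 0 : ℕ) : ℝ)) • S.α j = S.α i := by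
    rw [Finset.sum_eq_single i]
    · simp
    · intro j _ hj
      simp [hj]
    · intro h
      simp at h
  exact S.mem_posRootsI.mpr ⟨S.α_mem i, fun j => if j = i then 1 else 0,
    fun j hj => by simp [show j ≠ i from fun h => hi (h ▸ hj)], hsum.symm⟩

lemma posRootsI_pair {I : Finset (Fin (S.l+1))} (hI : I.Nonempty) {i : Fin (S.l+1)}
    (hi : i ∉ I) : S.rhoI I (S.coroot (S.α i)) = 1 := by
  classical
  set c := S.coroot (S.α i) with hcdef
  set P := S.posRootsI I with hPdef
  have hαc : S.α i c = 2 := S.pair_self (S.α i) (S.α_mem i)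
  -- closure of the reflection on P.erase (α i)
  have hclos : ∀ β ∈ P.erase (S.α i), β - β c • S.α i ∈ P.erase (S.α i) := by
    intro β hβ'
    have hβne : β ≠ S.α i := (Finset.mem_erase.mp hβ').1
    have hβP : β ∈ P := (Finset.mem_erase.mp hβ').2
    obtain ⟨hβR, b, hbI, hb⟩ := S.mem_posRootsI.mp hβP
    obtain ⟨n, hn⟩ := S.cryst (S.α i) (S.α_mem i) β hβR
    have hex : ∃ k, k ≠ i ∧ 1 ≤ b k := by
      by_contra hno
      push_neg at hno
      have hb' : β = ((b i : ℕ) : ℝ) • S.α i := by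
        rw [hb, Finset.sum_eq_single i]
        · intro j _ hj
          have hbj : b j = 0 := by have := hno j hj; omega
          rw [hbj]
          simp
        · intro h
          simp at h
      have hbi : b i ≠ 0 := by
        intro h0
        rw [h0] at hb'
        simp at hb'
        exact S.root_ne_zero hβR hb'
      rcases S.reduced (S.α i) (S.α_mem i) ((b i : ℕ) : ℝ) (by rw [← hb']; exact hβR)
        with h1 | h1
      · apply hβne
        rw [hb', h1, one_smul]
      · have h2 : (0:ℝ) ≤ ((b i : ℕ) : ℝ) := by positivity
        rw [h1] at h2
        linarith
    obtain ⟨k, hk, hbk⟩ := hex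
    set γ := β - β c • S.α i with hγdef
    have hγR : γ ∈ S.R := S.reflect_mem (S.α i) (S.α_mem i) β hβR
    set z : Fin (S.l+1) → ℤ := fun j => (b j : ℤ) - (if j = i then n else 0) with hzdef
    have hzI : ∀ j ∈ I, z j = 0 := by
      intro j hj
      simp [hzdef, hbI j hj, show j ≠ i from fun h => hi (h ▸ hj)]
    have e1 : (n:ℝ) • S.α i = ∑ j, (if j = i then (n:ℝ) else 0) • S.α j := by
      rw [Finset.sum_eq_single i]
      · simp
      · intro j _ hj
        simp [hj]
      · intro h
        simp at h
    have hγrep : γ = ∑ j, (z j : ℝ) • S.α j := by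
      rw [hγdef, hn, hb, e1, ← Finset.sum_sub_distrib]
      refine Finset.sum_congr rfl fun j _ => ?_
      by_cases hji : j = i
      · subst hji
        simp only [hzdef, if_pos rfl]
        push_cast
        module
      · simp only [hzdef, if_neg hji]
        push_cast
        module
    have hzk : 0 < z k := by
      simp [hzdef, hk]
      omega
    have hnn := S.signcoh hI hγR z hzI hγrep hzk
    have hγP : γ ∈ P := by
      refine S.mem_posRootsI.mpr ⟨hγR, fun j => (z j).toNat,
        fun j hj => by simp [hzI j hj], ?_⟩
      rw [hγrep]
      refine Finset.sum_congr rfl fun j _ => ?_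
      congr 1
      have h5 : (((z j).toNat : ℤ) : ℝ) = ((z j : ℤ) : ℝ) := by
        rw [Int.toNat_of_nonneg (hnn j)]
      exact_mod_cast h5.symm
    have hγne : γ ≠ S.α i := by
      intro he
      have e2 : ∑ j, (if j = i then (1:ℝ) else 0) • S.α j = S.α i := by
        rw [Finset.sum_eq_single i]
        · simp
        · intro j _ hj
          simp [hj]
        · intro h
          simp at h
      have e3 : ∑ j, ((z j : ℝ) - (if j = i then 1 else 0)) • S.α j
          = (∑ j, (z j : ℝ) • S.α j) - ∑ j, (if j = i then (1:ℝ) else 0) • S.α j := by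
        rw [← Finset.sum_sub_distrib]
        exact Finset.sum_congr rfl fun j _ => by module
      have h0 : ∑ j, ((z j : ℝ) - (if j = i then 1 else 0)) • S.α j = 0 := by
        rw [e3, e2, ← hγrep, he, sub_self]
      have h6 := S.indepI hI _
        (fun j hj => by
          simp [hzI j hj, show j ≠ i from fun h => hi (h ▸ hj)]) h0 k
      rw [if_neg hk] at h6
      have : (z k : ℝ) = 0 := by linarith
      have : z k = 0 := by exact_mod_cast this
      omega
    exact Finset.mem_erase.mpr ⟨hγne, hγP⟩
  -- the reflection is an involution on P.erase (α i)
  have hginv : ∀ β : Module.Dual ℝ 𝔱,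
      (β - β c • S.α i) - ((β - β c • S.α i) c) • S.α i = β := by
    intro β
    have h1 : (β - β c • S.α i) c = β c - β c * 2 := by
      simp [hαc]
    rw [h1]
    module
  have hsum : ∑ β ∈ P.erase (S.α i), (β - β c • S.α i) = ∑ β ∈ P.erase (S.α i), β :=
    Finset.sum_bij' (fun β _ => β - β c • S.α i) (fun β _ => β - β c • S.α i)
      hclos hclos (fun β _ => hginv β) (fun β _ => hginv β) (fun β _ => rfl)
  have e3 : ∑ β ∈ P.erase (S.α i), (β - β c • S.α i)
      = (∑ β ∈ P.erase (S.α i), β) - (∑ β ∈ P.erase (S.α i), β c) • S.α i := by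
    rw [Finset.sum_sub_distrib, ← Finset.sum_smul]
  have e4 : (∑ β ∈ P.erase (S.α i), β c) • S.α i = 0 := by
    have := hsum
    rw [e3] at this
    have h7 := sub_eq_self.mp this
    exact h7
  have e5 : ∑ β ∈ P.erase (S.α i), β c = 0 := by
    rcases smul_eq_zero.mp e4 with h | h
    · exact h
    · exact absurd h (S.root_ne_zero (S.α_mem i))
  have hαP : S.α i ∈ P := S.alpha_mem_posRootsI hi
  have hsplit : ∑ β ∈ P, β c = S.α i c + ∑ β ∈ P.erase (S.α i), β c :=
    (Finset.add_sum_erase _ _ hαP).symm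
  have hval : S.rhoI I c = 2⁻¹ * ∑ β ∈ P, β c := by
    rw [RSD.rhoI]
    simp [LinearMap.smul_apply]
    rfl
  rw [hval, hsplit, e5, hαc]
  ring

lemma posRootsI_zero : S.posRootsI {0} = S.posRoots := by
  ext β
  rw [S.mem_posRootsI, S.mem_posRoots]
  constructor
  · rintro ⟨hR, c, hcI, hc⟩
    refine ⟨hR, fun k => c k.succ, ?_⟩
    rw [hc, Fin.sum_univ_succ, show c 0 = 0 from hcI 0 (Finset.mem_singleton_self 0)]
    simp
  · rintro ⟨hR, c, hc⟩
    refine ⟨hR, fun i => Fin.cases 0 c i, fun j hj => by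
      rw [Finset.mem_singleton] at hj
      subst hj
      simp, ?_⟩
    rw [hc, Fin.sum_univ_succ]
    simp

lemma rhoI_zero : S.rhoI {0} = S.rho := by
  rw [RSD.rhoI, RSD.rho, S.posRootsI_zero]

lemma rho_pair_succ (k : Fin S.l) : S.rho (S.coroot (S.α k.succ)) = 1 := by
  rw [← S.rhoI_zero]
  exact S.posRootsI_pair ⟨0, Finset.mem_singleton_self 0⟩
    (by simp [Fin.succ_ne_zero])

end CCQ.RSD


namespace CCQ.RSD

variable {𝔱 : Type*} [AddCommGroup 𝔱] [Module ℝ 𝔱] (S : RSD 𝔱)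

lemma alpha_zero_eq : S.α 0 = -S.theta := by
  rw [show S.theta = -S.α 0 from rfl]
  module

lemma coroot_alpha_zero [FiniteDimensional ℝ 𝔱] :
    S.coroot (S.α 0) = - S.coroot S.theta := by
  classical
  set c : 𝔱 := S.coroot (S.α 0) with hcdef
  set c' : 𝔱 := - S.coroot S.theta with hc'def
  have hαc : S.α 0 c = 2 := S.pair_self _ (S.α_mem 0)
  have hαc' : S.α 0 c' = 2 := by
    rw [S.alpha_zero_eq, hc'def]
    simp [S.pair_self S.theta S.theta_mem]
  have hs : ∀ γ ∈ S.R, γ - γ c • S.α 0 ∈ S.R :=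
    fun γ hγ => S.reflect_mem _ (S.α_mem 0) γ hγ
  have hs' : ∀ γ ∈ S.R, γ - γ c' • S.α 0 ∈ S.R := by
    intro γ hγ
    have h1 : γ - γ c' • S.α 0 = γ - γ (S.coroot S.theta) • S.theta := by
      rw [S.alpha_zero_eq, hc'def]
      simp
    rw [h1]
    exact S.reflect_mem _ S.theta_mem γ hγ
  have hiter : ∀ γ ∈ S.R, ∀ nn : ℕ,
      γ + ((nn : ℝ) * (γ c' - γ c)) • S.α 0 ∈ S.R := by
    intro γ hγ nn
    induction nn with
    | zero => simpa using hγ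
    | succ nn ih =>
      set x := γ + ((nn : ℝ) * (γ c' - γ c)) • S.α 0 with hxdef
      have h2 := hs _ (hs' x ih)
      have e2 : x c = γ c + ((nn:ℝ) * (γ c' - γ c)) * 2 := by
        simp [hxdef, hαc]
      have e3 : x c' = γ c' + ((nn:ℝ) * (γ c' - γ c)) * 2 := by
        simp [hxdef, hαc']
      have h3 : (x - x c' • S.α 0) - ((x - x c' • S.α 0) c) • S.α 0
          = γ + (((nn:ℝ)+1) * (γ c' - γ c)) • S.α 0 := by
        have e1 : (x - x c' • S.α 0) c = x c - x c' * 2 := by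
          simp [hαc]
        rw [e1, e2, e3, hxdef]
        module
      rw [h3] at h2
      have hcast : ((nn + 1 : ℕ) : ℝ) = (nn : ℝ) + 1 := by push_cast; ring
      rw [hcast]
      exact h2
  have hzero : ∀ γ ∈ S.R, γ c' - γ c = 0 := by
    intro γ hγ
    by_contra hne
    have hinj : Function.Injective
        (fun nn : ℕ => γ + ((nn : ℝ) * (γ c' - γ c)) • S.α 0) := by
      intro a b hab
      simp only at hab
      have h4 : ((a:ℝ) * (γ c' - γ c)) • S.α 0 = ((b:ℝ) * (γ c' - γ c)) • S.α 0 :=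
        add_left_cancel hab
      have h5 : ((a:ℝ) * (γ c' - γ c) - (b:ℝ) * (γ c' - γ c)) • S.α 0 = 0 := by
        have e6 : ((a:ℝ) * (γ c' - γ c) - (b:ℝ) * (γ c' - γ c)) • S.α 0
            = ((a:ℝ) * (γ c' - γ c)) • S.α 0 - ((b:ℝ) * (γ c' - γ c)) • S.α 0 := by
          module
        rw [e6, h4, sub_self]
      rcases smul_eq_zero.mp h5 with h6 | h6
      · have h7 : ((a:ℝ) - b) * (γ c' - γ c) = 0 := by ring_nf; ring_nf at h6; linarith
        rcases mul_eq_zero.mp h7 with h8 | h8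
        · have : (a:ℝ) = b := by linarith
          exact_mod_cast this
        · exact absurd h8 hne
      · exact absurd h6 (S.root_ne_zero (S.α_mem 0))
    exact Set.infinite_of_injective_forall_mem hinj (fun nn => hiter γ hγ nn) S.finR
  have hspan : ∀ φ : Module.Dual ℝ 𝔱, φ (c' - c) = 0 := by
    intro φ
    have h7 : Submodule.span ℝ S.R ≤ LinearMap.ker (Module.Dual.eval ℝ 𝔱 (c' - c)) := by
      rw [Submodule.span_le]
      intro γ hγ
      have h8 : γ (c' - c) = 0 := by
        rw [map_sub]
        exact hzero γ hγ
      simpa [LinearMap.mem_ker] using h8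
    rw [S.spanR] at h7
    have h9 := h7 (Submodule.mem_top (x := φ))
    simpa using h9
  have h10 : c' - c = 0 := (Module.forall_dual_apply_eq_zero_iff ℝ (c' - c)).mp hspan
  have h11 : c = c' := by
    have := sub_eq_zero.mp h10
    exact this.symm
  rw [hcdef, hc'def] at h11
  exact h11

lemma rho_pair_zero [FiniteDimensional ℝ 𝔱] :
    S.rho (S.coroot (S.α 0)) = 1 - S.hv := by
  rw [S.coroot_alpha_zero, map_neg, RSD.hv]
  ring

lemma nuI_pair [FiniteDimensional ℝ 𝔱] {I : Finset (Fin (S.l+1))} (hI : I.Nonempty)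
    {i : Fin (S.l+1)} (hi : i ∉ I) :
    (S.nuI I) (S.coroot (S.α i)) = - S.kd i := by
  have hrhoI := S.posRootsI_pair hI hi
  have hval : S.nuI I (S.coroot (S.α i))
      = S.hv⁻¹ * (S.rho (S.coroot (S.α i)) - S.rhoI I (S.coroot (S.α i))) := by
    rw [RSD.nuI]
    simp
  rw [hval, hrhoI]
  rcases Fin.eq_zero_or_eq_succ i with rfl | ⟨k, rfl⟩
  · rw [S.rho_pair_zero, show S.kd 0 = 1 from if_pos rfl]
    field_simp
    rw [show (1 - S.hv - 1) = -S.hv by ring, neg_div, div_self S.hv_ne]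
  · rw [S.rho_pair_succ k, show S.kd k.succ = 0 from if_neg (Fin.succ_ne_zero k)]
    ring

lemma hv_smul_nuI (I : Finset (Fin (S.l+1))) :
    S.hv • S.nuI I = S.rho - S.rhoI I := by
  rw [RSD.nuI, smul_smul, mul_inv_cancel₀ S.hv_ne, one_smul]

end CCQ.RSD


namespace CCQ.RSD

variable {𝔱 : Type*} [AddCommGroup 𝔱] [Module ℝ 𝔱] (S : RSD 𝔱)

lemma srefl_apply (i : Fin (S.l+1)) (ν : Module.Dual ℝ 𝔱) :
    S.srefl i ν = ν - ν (S.coroot (S.α i)) • S.α i := by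
  rw [RSD.srefl, Module.reflection_apply]
  simp

lemma sigma_apply (m : ℝ) (i : Fin (S.l+1)) (ν : Module.Dual ℝ 𝔱) :
    S.sigma m i ν = ν - (ν (S.coroot (S.α i)) + m * S.kd i) • S.α i := by
  show (Module.reflection (S.pairD i)).toAffineEquiv.trans
    (AffineEquiv.constVAdd ℝ _ (-((m * S.kd i) • S.α i))) ν = _
  simp [Module.reflection_apply, AffineEquiv.constVAdd_apply]
  module

lemma sigma_linear (m : ℝ) (i : Fin (S.l+1)) : (S.sigma m i).linear = S.srefl i := rfl

end CCQ.RSD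



/-- (i) for `i ∉ I` the level-`m` affine reflection `σ_i` fixes `m·ν_I` and
equals `ν ↦ s_{α_i}(ν - m·ν_I) + m·ν_I`; consequently every `w ∈ W_I` fixes `m·ν_I`,
acts by `ν ↦ w̄(ν - m·ν_I) + m·ν_I` (`w̄` the linear part), and `w ↦ w̄` is an
isomorphism from `W_I` onto the subgroup `W̄_I ⊆ W` generated by `{s_{α_i} : i ∉ I}`.
(ii) with `w̄ •_m ν := w̄(ν - m·ν_I) + m·ν_I`, for every `k ≥ 0`, `w̄ ∈ W̄_I`, `μ`:
`w̄ •_k (μ+ρ_I) - ρ_I = w̄ •_{k+h^∨} (μ+ρ) - ρ`. -/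
theorem statement7 {𝔱 : Type} [AddCommGroup 𝔱] [Module ℝ 𝔱] [FiniteDimensional ℝ 𝔱]
    (S : RSD 𝔱) (I : Finset (Fin (S.l + 1))) (hI : I.Nonempty) (m : ℤ) (hm : 0 < m) :
    (∀ i ∉ I, S.sigma (m : ℝ) i ((m : ℝ) • S.nuI I) = (m : ℝ) • S.nuI I ∧
      ∀ ν : Module.Dual ℝ 𝔱,
        S.sigma (m : ℝ) i ν = S.srefl i (ν - (m : ℝ) • S.nuI I) + (m : ℝ) • S.nuI I) ∧
    (∀ w ∈ S.WIA (m : ℝ) I, w ((m : ℝ) • S.nuI I) = (m : ℝ) • S.nuI I ∧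
      ∀ ν : Module.Dual ℝ 𝔱, w ν = w.linear (ν - (m : ℝ) • S.nuI I) + (m : ℝ) • S.nuI I) ∧
    (∀ w w' : Module.Dual ℝ 𝔱 ≃ᵃ[ℝ] Module.Dual ℝ 𝔱,
      (w * w').linear = w.linear * w'.linear) ∧
    (∀ w ∈ S.WIA (m : ℝ) I, w.linear ∈ S.WbarI I) ∧
    (∀ w ∈ S.WIA (m : ℝ) I, ∀ w' ∈ S.WIA (m : ℝ) I, w.linear = w'.linear → w = w') ∧
    (∀ e ∈ S.WbarI I, ∃ w ∈ S.WIA (m : ℝ) I, w.linear = e) ∧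
    (∀ k : ℕ, ∀ e ∈ S.WbarI I, ∀ μ : Module.Dual ℝ 𝔱,
      (e (μ + S.rhoI I - (k : ℝ) • S.nuI I) + (k : ℝ) • S.nuI I) - S.rhoI I =
        (e (μ + S.rho - ((k : ℝ) + S.hv) • S.nuI I) + ((k : ℝ) + S.hv) • S.nuI I)
          - S.rho) := by
  classical
  set ν₀ : Module.Dual ℝ 𝔱 := (m : ℝ) • S.nuI I with hν₀def
  have hν0 : ∀ i ∉ I, ν₀ (S.coroot (S.α i)) = -((m : ℝ) * S.kd i) := by
    intro i hi
    have h1 : ν₀ (S.coroot (S.α i)) = (m : ℝ) * (S.nuI I (S.coroot (S.α i))) := by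
      rw [hν₀def]
      simp
    rw [h1, S.nuI_pair hI hi]
    ring
  have hpart1 : ∀ i ∉ I, S.sigma (m : ℝ) i ν₀ = ν₀ ∧
      ∀ ν : Module.Dual ℝ 𝔱, S.sigma (m : ℝ) i ν = S.srefl i (ν - ν₀) + ν₀ := by
    intro i hi
    constructor
    · rw [S.sigma_apply, hν0 i hi]
      simp
    · intro ν
      rw [S.sigma_apply, S.srefl_apply, LinearMap.sub_apply, hν0 i hi]
      module
  have hpart2 : ∀ w ∈ S.WIA (m : ℝ) I, w ν₀ = ν₀ ∧
      ∀ ν : Module.Dual ℝ 𝔱, w ν = w.linear (ν - ν₀) + ν₀ := by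
    intro w hw
    induction hw using Subgroup.closure_induction with
    | mem x hx =>
      obtain ⟨i, hi, rfl⟩ := hx
      refine ⟨(hpart1 i hi).1, fun ν => ?_⟩
      rw [(hpart1 i hi).2 ν, S.sigma_linear]
    | one =>
      refine ⟨rfl, fun ν => ?_⟩
      show ν = (1 : Module.Dual ℝ 𝔱 ≃ᵃ[ℝ] Module.Dual ℝ 𝔱).linear (ν - ν₀) + ν₀
      show ν = (ν - ν₀) + ν₀
      abel
    | mul x y hx hy px py =>
      refine ⟨?_, fun ν => ?_⟩
      · show x (y ν₀) = ν₀
        rw [py.1, px.1]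
      · show x (y ν) = (x * y).linear (ν - ν₀) + ν₀
        rw [py.2 ν, px.2 (y.linear (ν - ν₀) + ν₀), add_sub_cancel_right]
        rfl
    | inv x hx px =>
      refine ⟨?_, fun ν => ?_⟩
      · conv_lhs => rw [← px.1]
        exact x.symm_apply_apply ν₀
      · have key : x ((x⁻¹).linear (ν - ν₀) + ν₀) = ν := by
          rw [px.2 ((x⁻¹).linear (ν - ν₀) + ν₀), add_sub_cancel_right]
          have h2 : x.linear ((x⁻¹).linear (ν - ν₀)) = ν - ν₀ := by
            show x.linear ((x.linear)⁻¹ (ν - ν₀)) = ν - ν₀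
            exact x.linear.apply_symm_apply (ν - ν₀)
          rw [h2]
          abel
        conv_lhs => rw [← key]
        exact x.symm_apply_apply _
  refine ⟨hpart1, hpart2, fun w w' => rfl, ?_, ?_, ?_, ?_⟩
  · -- linear parts lie in WbarI
    intro w hw
    induction hw using Subgroup.closure_induction with
    | mem x hx =>
      obtain ⟨i, hi, rfl⟩ := hx
      rw [S.sigma_linear]
      exact Subgroup.subset_closure ⟨i, hi, rfl⟩
    | one =>
      show (1 : Module.Dual ℝ 𝔱 ≃ₗ[ℝ] Module.Dual ℝ 𝔱) ∈ S.WbarI I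
      exact (S.WbarI I).one_mem
    | mul x y hx hy px py =>
      show x.linear * y.linear ∈ S.WbarI I
      exact (S.WbarI I).mul_mem px py
    | inv x hx px =>
      show (x.linear)⁻¹ ∈ S.WbarI I
      exact (S.WbarI I).inv_mem px
  · -- injectivity
    intro w hw w' hw' heq
    refine AffineEquiv.ext fun ν => ?_
    rw [(hpart2 w hw).2 ν, (hpart2 w' hw').2 ν, heq]
  · -- surjectivity
    intro e he
    induction he using Subgroup.closure_induction with
    | mem x hx =>
      obtain ⟨i, hi, rfl⟩ := hx
      exact ⟨S.sigma (m : ℝ) i, Subgroup.subset_closure ⟨i, hi, rfl⟩, rfl⟩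
    | one => exact ⟨1, (S.WIA (m : ℝ) I).one_mem, rfl⟩
    | mul x y hx hy px py =>
      obtain ⟨w, hw, rfl⟩ := px
      obtain ⟨w', hw', rfl⟩ := py
      exact ⟨w * w', (S.WIA (m : ℝ) I).mul_mem hw hw', rfl⟩
    | inv x hx px =>
      obtain ⟨w, hw, rfl⟩ := px
      exact ⟨w⁻¹, (S.WIA (m : ℝ) I).inv_mem hw, rfl⟩
  · -- the level shift identity
    intro k e he μ
    have hsplit : ((k : ℝ) + S.hv) • S.nuI I
        = (k : ℝ) • S.nuI I + (S.rho - S.rhoI I) := by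
      calc ((k : ℝ) + S.hv) • S.nuI I
          = (k : ℝ) • S.nuI I + S.hv • S.nuI I := add_smul _ _ _
        _ = (k : ℝ) • S.nuI I + (S.rho - S.rhoI I) := by rw [S.hv_smul_nuI]
    have harg : μ + S.rho - ((k : ℝ) + S.hv) • S.nuI I
        = μ + S.rhoI I - (k : ℝ) • S.nuI I := by
      rw [hsplit]
      abel
    rw [harg, hsplit]
    abel
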